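/- With the twisted GKLO operators as in the context: for every i ∈ I and 1 ≤ k ≤ m_i, the composition κ_{i,k} ∘ κ'_{i,k} is the multiplication operator M(f), where f = R_i(γ_{i,k}) · ∏_{j ∈ {i−1,i+1}} ∏_{l=1}^{m_j}(γ_{i,k}² − (γ_{j,l} + ½ℏ)²) / [4(γ_{i,k} − ½ℏ)(γ_{i,k} + ½ℏ) · ∏_{1≤l≤m_i, l≠k}(γ_{i,k}² − γ_{i,l}²)(γ_{i,k}² − ξ_{i,l}²)]. -/
import Mathlib


/- Twisted GKLO representation setup (type AI).
   Indices: `i ∈ I = {1,…,n−1}`, `1 ≤ k ≤ m i`, with conventions `m 0 = m n = 0`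
   (and `lam 0 = lam n = 0`), so that the indeterminates are exactly
   `ℏ`, `γ_{i,k}` (`i ∈ I`, `1 ≤ k ≤ m i`), `r_{i,t}` (`i ∈ I`, `1 ≤ t ≤ lam i`). -/

noncomputable section

/-- The indexing type of the indeterminates: `ℏ`, the `γ_{i,k}` and the `r_{i,t}`. -/
abbrev GVar (n : ℕ) (m lam : ℕ → ℕ) : Type :=
  Unit ⊕ ((Σ i : Fin (n + 1), Fin (m i)) ⊕ (Σ i : Fin (n + 1), Fin (lam i)))

/-- `F`, the fraction field of the polynomial ring over `ℂ` in the indeterminates. -/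
abbrev GF (n : ℕ) (m lam : ℕ → ℕ) : Type :=
  FractionRing (MvPolynomial (GVar n m lam) ℂ)

/-- The indeterminate `ℏ`. -/
def hb (n : ℕ) (m lam : ℕ → ℕ) : GF n m lam :=
  algebraMap (MvPolynomial (GVar n m lam) ℂ) (GF n m lam) (MvPolynomial.X (Sum.inl ()))

/-- The indeterminate `γ_{i,k}` (for `1 ≤ k ≤ m i`, `i ≤ n`; junk value `0` otherwise). -/
def gam (n : ℕ) (m lam : ℕ → ℕ) (i k : ℕ) : GF n m lam :=
  if h : i < n + 1 ∧ k - 1 < m i then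
    algebraMap (MvPolynomial (GVar n m lam) ℂ) (GF n m lam)
      (MvPolynomial.X (Sum.inr (Sum.inl ⟨⟨i, h.1⟩, ⟨k - 1, h.2⟩⟩)))
  else 0

/-- The indeterminate `r_{i,t}` (for `1 ≤ t ≤ lam i`, `i ≤ n`; junk value `0` otherwise). -/
def rv (n : ℕ) (m lam : ℕ → ℕ) (i t : ℕ) : GF n m lam :=
  if h : i < n + 1 ∧ t - 1 < lam i then
    algebraMap (MvPolynomial (GVar n m lam) ℂ) (GF n m lam)
      (MvPolynomial.X (Sum.inr (Sum.inr ⟨⟨i, h.1⟩, ⟨t - 1, h.2⟩⟩)))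
  else 0

/-- `ξ_{i,k} = γ_{i,k} + ℏ`. -/
def xi (n : ℕ) (m lam : ℕ → ℕ) (i k : ℕ) : GF n m lam :=
  gam n m lam i k + hb n m lam

/-- `R_i(x) = ∏_{t=1}^{λ_i} (x² − r_{i,t}²)`. -/
def RR (n : ℕ) (m lam : ℕ → ℕ) (i : ℕ) (x : GF n m lam) : GF n m lam :=
  ∏ t ∈ Finset.Icc 1 (lam i), (x ^ 2 - rv n m lam i t ^ 2)

/-- The coefficient `c_{i,k}` of the twisted GKLO operator `κ_{i,k}`. -/
def cc (n : ℕ) (m lam : ℕ → ℕ) (i k : ℕ) : GF n m lam :=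
  ((∏ l ∈ Finset.Icc 1 (m (i + 1)),
      (gam n m lam i k ^ 2 - (gam n m lam (i + 1) l + hb n m lam / 2) ^ 2)) *
    ∏ l ∈ Finset.Icc 1 (m (i - 1)),
      (gam n m lam i k + gam n m lam (i - 1) l + hb n m lam / 2)) /
  (2 * (gam n m lam i k - hb n m lam / 2) *
    ∏ l ∈ (Finset.Icc 1 (m i)).erase k, (gam n m lam i k ^ 2 - gam n m lam i l ^ 2))

/-- The coefficient `c'_{i,k}` of the twisted GKLO operator `κ'_{i,k}`. -/
def cc' (n : ℕ) (m lam : ℕ → ℕ) (i k : ℕ) : GF n m lam :=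
  (RR n m lam i (xi n m lam i k) *
    ∏ l ∈ Finset.Icc 1 (m (i - 1)),
      (xi n m lam i k - gam n m lam (i - 1) l - hb n m lam / 2)) /
  (2 * (gam n m lam i k + 3 * hb n m lam / 2) *
    ∏ l ∈ (Finset.Icc 1 (m i)).erase k, (xi n m lam i k ^ 2 - xi n m lam i l ^ 2))

/-- `M(f)`, the multiplication operator `x ↦ f·x`, as a `ℂ`-linear endomorphism of `F`. -/
def Mop (n : ℕ) (m lam : ℕ → ℕ) (f : GF n m lam) : Module.End ℂ (GF n m lam) :=
  LinearMap.mulLeft ℂ f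

/-- `κ_{i,k} = M(c_{i,k}) ∘ σ⁻_{i,k}`, where `σ` is the family of automorphisms `σ⁻`. -/
def kap (n : ℕ) (m lam : ℕ → ℕ) (σ : ℕ → ℕ → (GF n m lam ≃ₐ[ℂ] GF n m lam))
    (i k : ℕ) : Module.End ℂ (GF n m lam) :=
  Mop n m lam (cc n m lam i k) * (σ i k).toLinearMap

/-- `κ'_{i,k} = M(c'_{i,k}) ∘ σ⁺_{i,k}`, where `σ` is the family of automorphisms `σ⁺`. -/
def kap' (n : ℕ) (m lam : ℕ → ℕ) (σ : ℕ → ℕ → (GF n m lam ≃ₐ[ℂ] GF n m lam))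
    (i k : ℕ) : Module.End ℂ (GF n m lam) :=
  Mop n m lam (cc' n m lam i k) * (σ i k).toLinearMap


lemma gklo_comp_eq_id {n : ℕ} {m lam : ℕ → ℕ}
    (f g : GF n m lam ≃ₐ[ℂ] GF n m lam)
    (h : ∀ v : GVar n m lam,
      f (g (algebraMap (MvPolynomial (GVar n m lam) ℂ) (GF n m lam) (MvPolynomial.X v))) =
        algebraMap (MvPolynomial (GVar n m lam) ℂ) (GF n m lam) (MvPolynomial.X v)) :
    ∀ x, f (g x) = x := by
  have key : (f.toAlgHom.toRingHom.comp g.toAlgHom.toRingHom) = RingHom.id (GF n m lam) := by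
    apply IsLocalization.ringHom_ext (nonZeroDivisors (MvPolynomial (GVar n m lam) ℂ))
    apply MvPolynomial.ringHom_ext
    · intro a
      have e : (algebraMap (MvPolynomial (GVar n m lam) ℂ) (GF n m lam)) (MvPolynomial.C a) =
          algebraMap ℂ (GF n m lam) a := by
        rw [← MvPolynomial.algebraMap_eq, ← IsScalarTower.algebraMap_apply]
      simp [e, AlgEquiv.commutes]
    · intro v
      simpa using h v
  intro x
  simpa using RingHom.congr_fun key x

lemma gam_eq_X {n : ℕ} {m lam : ℕ → ℕ} (i' : Fin (n + 1)) (k' : Fin (m i'.val)) :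
    algebraMap (MvPolynomial (GVar n m lam) ℂ) (GF n m lam)
      (MvPolynomial.X (Sum.inr (Sum.inl ⟨i', k'⟩))) = gam n m lam i'.val (k'.val + 1) := by
  rw [gam, dif_pos ⟨i'.isLt, by simpa using k'.isLt⟩]
  simp

lemma rv_eq_X {n : ℕ} {m lam : ℕ → ℕ} (i' : Fin (n + 1)) (t : Fin (lam i'.val)) :
    algebraMap (MvPolynomial (GVar n m lam) ℂ) (GF n m lam)
      (MvPolynomial.X (Sum.inr (Sum.inr ⟨i', t⟩))) = rv n m lam i'.val (t.val + 1) := by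
  rw [rv, dif_pos ⟨i'.isLt, by simpa using t.isLt⟩]
  simp

/-- The Cartan matrix of `sl_n`: `a_{ii} = 2`, `a_{ij} = −1` if `|i−j|=1`, else `0`. -/
def cartan (i j : ℕ) : ℤ :=
  if i = j then 2 else if i + 1 = j ∨ j + 1 = i then -1 else 0

set_option maxHeartbeats 2000000 in
theorem gklo_kappa_comp_kappaP (n : ℕ) (hn : 2 ≤ n) (m lam : ℕ → ℕ)
    (hm0 : m 0 = 0) (hmn : m n = 0) (hlam0 : lam 0 = 0) (hlamn : lam n = 0)
    (σm σp : ℕ → ℕ → (GF n m lam ≃ₐ[ℂ] GF n m lam))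
    (hσmh : ∀ i k, σm i k (hb n m lam) = hb n m lam)
    (hσph : ∀ i k, σp i k (hb n m lam) = hb n m lam)
    (hσmr : ∀ i k i' t, σm i k (rv n m lam i' t) = rv n m lam i' t)
    (hσpr : ∀ i k i' t, σp i k (rv n m lam i' t) = rv n m lam i' t)
    (hσmg : ∀ i k i' k', 1 ≤ i' → i' ≤ n - 1 → 1 ≤ k' → k' ≤ m i' →
      σm i k (gam n m lam i' k') =
        if i' = i ∧ k' = k then gam n m lam i k - hb n m lam else gam n m lam i' k')
    (hσpg : ∀ i k i' k', 1 ≤ i' → i' ≤ n - 1 → 1 ≤ k' → k' ≤ m i' →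
      σp i k (gam n m lam i' k') =
        if i' = i ∧ k' = k then gam n m lam i k + hb n m lam else gam n m lam i' k')
    (i k : ℕ) (hi : 1 ≤ i) (hi' : i ≤ n - 1) (hk : 1 ≤ k) (hk' : k ≤ m i) :
    kap n m lam σm i k * kap' n m lam σp i k =
      Mop n m lam
        (RR n m lam i (gam n m lam i k) *
            ((∏ l ∈ Finset.Icc 1 (m (i - 1)),
                (gam n m lam i k ^ 2 - (gam n m lam (i - 1) l + hb n m lam / 2) ^ 2)) *
              ∏ l ∈ Finset.Icc 1 (m (i + 1)),
                (gam n m lam i k ^ 2 - (gam n m lam (i + 1) l + hb n m lam / 2) ^ 2)) /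
          (4 * (gam n m lam i k - hb n m lam / 2) * (gam n m lam i k + hb n m lam / 2) *
            ∏ l ∈ (Finset.Icc 1 (m i)).erase k,
              ((gam n m lam i k ^ 2 - gam n m lam i l ^ 2) *
                (gam n m lam i k ^ 2 - xi n m lam i l ^ 2)))) := by
  -- σm applied to gam i k
  have hg : σm i k (gam n m lam i k) = gam n m lam i k - hb n m lam := by
    rw [hσmg i k i k hi hi' hk hk', if_pos ⟨rfl, rfl⟩]
  -- σm fixes gam (i-1) l for l in range
  have hp1 : ∀ l ∈ Finset.Icc 1 (m (i - 1)),
      σm i k (gam n m lam (i - 1) l) = gam n m lam (i - 1) l := by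
    intro l hl
    rw [Finset.mem_Icc] at hl
    have h1 : 1 ≤ i - 1 := by
      by_contra hcon
      have h0 : i - 1 = 0 := by omega
      rw [h0, hm0] at hl; omega
    rw [hσmg i k _ _ h1 (by omega) hl.1 hl.2, if_neg (by omega)]
  -- σm fixes gam i l for l ≠ k
  have hp2 : ∀ l ∈ (Finset.Icc 1 (m i)).erase k,
      σm i k (gam n m lam i l) = gam n m lam i l := by
    intro l hl
    rw [Finset.mem_erase, Finset.mem_Icc] at hl
    rw [hσmg i k i l hi hi' hl.2.1 hl.2.2, if_neg (fun hc => hl.1 hc.2)]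
  -- σm ∘ σp = id
  have hid : ∀ x, σm i k (σp i k x) = x := by
    apply gklo_comp_eq_id
    rintro (⟨⟩ | ⟨⟨i', k'⟩ | ⟨i', t⟩⟩)
    · have e : algebraMap (MvPolynomial (GVar n m lam) ℂ) (GF n m lam)
          (MvPolynomial.X (Sum.inl ())) = hb n m lam := rfl
      rw [e, hσph, hσmh]
    · rw [gam_eq_X]
      have hmi : 0 < m i'.val := k'.pos
      have hi1 : 1 ≤ (i' : ℕ) := by
        by_contra hcon
        have h0 : (i' : ℕ) = 0 := by omega
        rw [h0, hm0] at hmi; omega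
      have hi2 : (i' : ℕ) ≤ n - 1 := by
        have h1 : (i' : ℕ) ≤ n := Nat.lt_succ_iff.mp i'.isLt
        rcases eq_or_lt_of_le h1 with h0 | h0
        · exfalso; rw [h0, hmn] at hmi; omega
        · omega
      have hk2 : (k' : ℕ) + 1 ≤ m i'.val := k'.isLt
      rw [hσpg i k _ _ hi1 hi2 (Nat.le_add_left 1 _) hk2]
      by_cases hcase : (i' : ℕ) = i ∧ (k' : ℕ) + 1 = k
      · obtain ⟨h1, h2⟩ := hcase
        subst h1; subst h2
        rw [if_pos ⟨rfl, rfl⟩, map_add, hσmh, hg]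
        ring
      · rw [if_neg hcase, hσmg i k _ _ hi1 hi2 (Nat.le_add_left 1 _) hk2, if_neg hcase]
    · rw [rv_eq_X, hσpr, hσmr]
  -- compute σm (cc')
  have e1 : σm i k (RR n m lam i (xi n m lam i k)) = RR n m lam i (gam n m lam i k) := by
    rw [RR, RR, map_prod]
    refine Finset.prod_congr rfl fun t ht => ?_
    rw [map_sub, map_pow, map_pow, hσmr, xi, map_add, hg, hσmh]
    ring
  have e2 : σm i k (∏ l ∈ Finset.Icc 1 (m (i - 1)),
        (xi n m lam i k - gam n m lam (i - 1) l - hb n m lam / 2)) =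
      ∏ l ∈ Finset.Icc 1 (m (i - 1)),
        (gam n m lam i k - gam n m lam (i - 1) l - hb n m lam / 2) := by
    rw [map_prod]
    refine Finset.prod_congr rfl fun l hl => ?_
    rw [map_sub, map_sub, map_div₀, xi, map_add, hg, hσmh, hp1 l hl, map_ofNat]
    ring
  have e3 : σm i k (2 * (gam n m lam i k + 3 * hb n m lam / 2)) =
      2 * (gam n m lam i k + hb n m lam / 2) := by
    rw [map_mul, map_add, map_div₀, map_mul, hg, hσmh, map_ofNat, map_ofNat]
    ring
  have e4 : σm i k (∏ l ∈ (Finset.Icc 1 (m i)).erase k,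
        (xi n m lam i k ^ 2 - xi n m lam i l ^ 2)) =
      ∏ l ∈ (Finset.Icc 1 (m i)).erase k,
        (gam n m lam i k ^ 2 - xi n m lam i l ^ 2) := by
    rw [map_prod]
    refine Finset.prod_congr rfl fun l hl => ?_
    rw [map_sub, map_pow, map_pow, xi, xi, map_add, map_add, hg, hσmh, hp2 l hl]
    ring
  have hmap : σm i k (cc' n m lam i k) =
      (RR n m lam i (gam n m lam i k) *
        ∏ l ∈ Finset.Icc 1 (m (i - 1)),
          (gam n m lam i k - gam n m lam (i - 1) l - hb n m lam / 2)) /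
      (2 * (gam n m lam i k + hb n m lam / 2) *
        ∏ l ∈ (Finset.Icc 1 (m i)).erase k,
          (gam n m lam i k ^ 2 - xi n m lam i l ^ 2)) := by
    rw [cc', map_div₀, map_mul, map_mul, e1, e2, e3, e4]
  -- main value identity
  have hval : cc n m lam i k * σm i k (cc' n m lam i k) =
      RR n m lam i (gam n m lam i k) *
          ((∏ l ∈ Finset.Icc 1 (m (i - 1)),
              (gam n m lam i k ^ 2 - (gam n m lam (i - 1) l + hb n m lam / 2) ^ 2)) *
            ∏ l ∈ Finset.Icc 1 (m (i + 1)),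
              (gam n m lam i k ^ 2 - (gam n m lam (i + 1) l + hb n m lam / 2) ^ 2)) /
        (4 * (gam n m lam i k - hb n m lam / 2) * (gam n m lam i k + hb n m lam / 2) *
          ∏ l ∈ (Finset.Icc 1 (m i)).erase k,
            ((gam n m lam i k ^ 2 - gam n m lam i l ^ 2) *
              (gam n m lam i k ^ 2 - xi n m lam i l ^ 2))) := by
    rw [cc, hmap, div_mul_div_comm]
    have hnum : (∏ l ∈ Finset.Icc 1 (m (i - 1)),
          (gam n m lam i k + gam n m lam (i - 1) l + hb n m lam / 2)) *
        ∏ l ∈ Finset.Icc 1 (m (i - 1)),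
          (gam n m lam i k - gam n m lam (i - 1) l - hb n m lam / 2) =
        ∏ l ∈ Finset.Icc 1 (m (i - 1)),
          (gam n m lam i k ^ 2 - (gam n m lam (i - 1) l + hb n m lam / 2) ^ 2) := by
      rw [← Finset.prod_mul_distrib]
      exact Finset.prod_congr rfl fun l _ => by ring
    have hden : (∏ l ∈ (Finset.Icc 1 (m i)).erase k,
          (gam n m lam i k ^ 2 - gam n m lam i l ^ 2)) *
        ∏ l ∈ (Finset.Icc 1 (m i)).erase k,
          (gam n m lam i k ^ 2 - xi n m lam i l ^ 2) =
        ∏ l ∈ (Finset.Icc 1 (m i)).erase k,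
          ((gam n m lam i k ^ 2 - gam n m lam i l ^ 2) *
            (gam n m lam i k ^ 2 - xi n m lam i l ^ 2)) := by
      rw [← Finset.prod_mul_distrib]
    congr 1
    · linear_combination (RR n m lam i (gam n m lam i k) *
        ∏ l ∈ Finset.Icc 1 (m (i + 1)),
          (gam n m lam i k ^ 2 - (gam n m lam (i + 1) l + hb n m lam / 2) ^ 2)) * hnum
    · linear_combination (4 * (gam n m lam i k - hb n m lam / 2) *
        (gam n m lam i k + hb n m lam / 2)) * hden
  -- conclude
  ext x
  simp only [kap, kap', Mop, Module.End.mul_apply, LinearMap.mulLeft_apply,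
    AlgEquiv.toLinearMap_apply]
  rw [map_mul, hid, ← mul_assoc, hval]
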